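/- (Main theorem, Jacobs) Jeffrey's update rule does not increase the relative entropy between the observed distribution and the prediction: if θ_{t+1}(x) = Σ_y τ(y) θ_t(x)C(y|x)/p_{θ_t}(y) is the Jeffrey posterior of θ_t, then D_KL(τ || p_{θ_{t+1}}) ≤ D_KL(τ || p_{θ_t}). -/

import Mathlib

open Finset Real

/-- Jensen's inequality for `log`. -/
lemma jensen_log_aux {ι : Type} (s : Finset ι) (w v : ι → ℝ)
    (hw : ∀ i ∈ s, 0 ≤ w i) (hw1 : ∑ i ∈ s, w i = 1)
    (hv : ∀ i ∈ s, 0 < w i → 0 < v i) :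
    ∑ i ∈ s, w i * Real.log (v i) ≤ Real.log (∑ i ∈ s, w i * v i) := by
  classical
  set t := s.filter (fun i => 0 < w i) with ht
  have hsub : t ⊆ s := Finset.filter_subset _ _
  have hzero : ∀ i ∈ s, i ∉ t → w i = 0 := by
    intro i hi hit
    by_contra h
    exact hit (Finset.mem_filter.2 ⟨hi, lt_of_le_of_ne (hw i hi) (Ne.symm h)⟩)
  have h1 : ∑ i ∈ t, w i = 1 := by
    rw [← hw1]
    exact Finset.sum_subset hsub (fun i hi hit => hzero i hi hit)
  have h2 : ∑ i ∈ t, w i * Real.log (v i) = ∑ i ∈ s, w i * Real.log (v i) :=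
    Finset.sum_subset hsub (fun i hi hit => by rw [hzero i hi hit, zero_mul])
  have h3 : ∑ i ∈ t, w i * v i = ∑ i ∈ s, w i * v i :=
    Finset.sum_subset hsub (fun i hi hit => by rw [hzero i hi hit, zero_mul])
  have := strictConcaveOn_log_Ioi.concaveOn.le_map_sum
    (t := t) (w := w) (p := v)
    (fun i hi => hw i (hsub hi)) h1
    (fun i hi => hv i (hsub hi) (Finset.mem_filter.1 hi).2)
  simpa [smul_eq_mul, h2, h3] using this

/-- Gibbs' inequality. -/
lemma gibbs_aux {ι : Type} [Fintype ι] (a b : ι → ℝ) (ha : ∀ i, 0 ≤ a i)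
    (hb : ∀ i, 0 ≤ b i) (ha1 : ∑ i, a i = 1) (hb1 : ∑ i, b i ≤ 1)
    (hab : ∀ i, 0 < a i → 0 < b i) :
    0 ≤ ∑ i, a i * Real.log (a i / b i) := by
  have key : ∀ i, a i * Real.log (b i / a i) ≤ b i - a i := by
    intro i
    rcases eq_or_lt_of_le (ha i) with h | h
    · simp [← h, hb i]
    · have hbi := hab i h
      have := Real.log_le_sub_one_of_pos (div_pos hbi h)
      have h2 : a i * Real.log (b i / a i) ≤ a i * (b i / a i - 1) :=
        mul_le_mul_of_nonneg_left this (le_of_lt h)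
      calc a i * Real.log (b i / a i) ≤ a i * (b i / a i - 1) := h2
        _ = b i - a i := by field_simp
  have hsum : ∑ i, a i * Real.log (b i / a i) ≤ 0 := by
    calc ∑ i, a i * Real.log (b i / a i) ≤ ∑ i, (b i - a i) :=
          Finset.sum_le_sum (fun i _ => key i)
      _ = (∑ i, b i) - (∑ i, a i) := Finset.sum_sub_distrib _ _
      _ ≤ 0 := by rw [ha1]; linarith
  have heq : ∀ i, a i * Real.log (a i / b i) = -(a i * Real.log (b i / a i)) := by
    intro i
    rcases eq_or_lt_of_le (ha i) with h | h
    · simp [← h]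
    · have hbi := hab i h
      rw [Real.log_div (ne_of_gt h) (ne_of_gt hbi),
        Real.log_div (ne_of_gt hbi) (ne_of_gt h)]
      ring
  calc (0:ℝ) = -(0:ℝ) := by ring
    _ ≤ -∑ i, a i * Real.log (b i / a i) := by linarith
    _ = ∑ i, a i * Real.log (a i / b i) := by
        rw [← Finset.sum_neg_distrib]
        exact Finset.sum_congr rfl (fun i _ => (heq i).symm)

theorem jeffrey_update_reduces_kl
    {X Y : Type} [Fintype X] [Fintype Y]
    (C : X → Y → ℝ) (hC : ∀ x y, 0 ≤ C x y) (hCrow : ∀ x, ∑ y, C x y = 1)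
    (τ : Y → ℝ) (hτ : ∀ y, 0 ≤ τ y) (hτ1 : ∑ y, τ y = 1)
    (θt : X → ℝ) (hθt : ∀ x, 0 ≤ θt x) (hθt1 : ∑ x, θt x = 1)
    (hpos : ∀ y, 0 < τ y → 0 < ∑ x, θt x * C x y)
    (θt1 : X → ℝ)
    (hθt1def : ∀ x, θt1 x = ∑ y, τ y * (θt x * C x y / (∑ x', θt x' * C x' y))) :
    (∑ y, τ y * Real.log (τ y / (∑ x, θt1 x * C x y)))
    ≤ (∑ y, τ y * Real.log (τ y / (∑ x, θt x * C x y))) := by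
  classical
  set p : Y → ℝ := fun y => ∑ x, θt x * C x y with hp
  set q : Y → ℝ := fun y => ∑ x, θt1 x * C x y with hq
  have hpnn : ∀ y, 0 ≤ p y := fun y =>
    Finset.sum_nonneg (fun x _ => mul_nonneg (hθt x) (hC x y))
  -- θt1 is nonnegative
  have hθt1nn : ∀ x, 0 ≤ θt1 x := by
    intro x
    rw [hθt1def x]
    exact Finset.sum_nonneg (fun y _ => mul_nonneg (hτ y)
      (div_nonneg (mul_nonneg (hθt x) (hC x y)) (hpnn y)))
  -- θt x = 0 → θt1 x = 0
  have hzero : ∀ x, θt x = 0 → θt1 x = 0 := by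
    intro x hx
    rw [hθt1def x]
    simp [hx]
  -- θt1 sums to 1
  have hsum1 : ∑ x, θt1 x = 1 := by
    have : ∑ x, θt1 x = ∑ y, τ y * (p y / p y) := by
      simp_rw [hθt1def]
      rw [Finset.sum_comm]
      refine Finset.sum_congr rfl (fun y _ => ?_)
      rw [← Finset.mul_sum, ← Finset.sum_div]
    rw [this, ← hτ1]
    refine Finset.sum_congr rfl (fun y _ => ?_)
    rcases eq_or_lt_of_le (hτ y) with h | h
    · simp [← h]
    · rw [div_self (ne_of_gt (hpos y h)), mul_one]
  -- positivity of q where τ > 0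
  have hqpos : ∀ y, 0 < τ y → 0 < q y := by
    intro y hy
    have hpy := hpos y hy
    obtain ⟨x, hx⟩ := Finset.exists_lt_of_sum_lt (f := fun _ : X => (0:ℝ))
      (g := fun x => θt x * C x y) (by simpa using hpy)
    have hx' : 0 < θt x * C x y := hx.2
    have hθx : 0 < θt x := by
      rcases mul_pos_iff.1 hx' with ⟨h1, _⟩ | ⟨h1, h2⟩
      · exact h1
      · exact absurd (hC x y) (not_le.2 h2)
    have hCx : 0 < C x y := by
      rcases mul_pos_iff.1 hx' with ⟨_, h2⟩ | ⟨h1, _⟩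
      · exact h2
      · exact absurd (hθt x) (not_le.2 h1)
    have hθt1x : 0 < θt1 x := by
      rw [hθt1def x]
      refine Finset.sum_pos' (fun y' _ => mul_nonneg (hτ y')
        (div_nonneg (mul_nonneg (hθt x) (hC x y')) (hpnn y'))) ⟨y, Finset.mem_univ y, ?_⟩
      exact mul_pos hy (div_pos hx' hpy)
    calc (0:ℝ) < θt1 x * C x y := mul_pos hθt1x hCx
      _ ≤ q y := Finset.single_le_sum
          (fun x' _ => mul_nonneg (hθt1nn x') (hC x' y)) (Finset.mem_univ x)
  -- reduce to 0 ≤ ∑ τ y * log (q y / p y)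
  rw [← sub_nonneg, ← Finset.sum_sub_distrib]
  have hterm : ∀ y, τ y * Real.log (τ y / p y) - τ y * Real.log (τ y / q y)
      = τ y * Real.log (q y / p y) := by
    intro y
    rcases eq_or_lt_of_le (hτ y) with h | h
    · simp [← h]
    · have hpy := hpos y h
      have hqy := hqpos y h
      rw [Real.log_div (ne_of_gt h) (ne_of_gt hpy),
        Real.log_div (ne_of_gt h) (ne_of_gt hqy),
        Real.log_div (ne_of_gt hqy) (ne_of_gt hpy)]
      ring
  rw [Finset.sum_congr rfl (fun y _ => hterm y)]
  -- restrict to positive τ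
  set T := Finset.univ.filter (fun y => 0 < τ y) with hT
  have hres : ∑ y, τ y * Real.log (q y / p y) = ∑ y ∈ T, τ y * Real.log (q y / p y) := by
    symm
    refine Finset.sum_filter_of_ne (fun y _ hne => ?_)
    rcases eq_or_lt_of_le (hτ y) with h | h
    · exact absurd (by simp [← h]) hne
    · exact h
  rw [hres]
  -- Jensen per y in T
  have hjensen : ∀ y ∈ T, ∑ x, (θt x * C x y / p y) * Real.log (θt1 x / θt x)
      ≤ Real.log (q y / p y) := by
    intro y hy
    have hτy : 0 < τ y := (Finset.mem_filter.1 hy).2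
    have hpy := hpos y hτy
    have hwsum : ∑ x, θt x * C x y / p y = 1 := by
      rw [← Finset.sum_div, div_self (ne_of_gt hpy)]
    have hwv : ∑ x, (θt x * C x y / p y) * (θt1 x / θt x) = q y / p y := by
      rw [hq, Finset.sum_div]
      refine Finset.sum_congr rfl (fun x _ => ?_)
      rcases eq_or_lt_of_le (hθt x) with h | h
      · simp [← h, hzero x h.symm]
      · field_simp
    have := jensen_log_aux Finset.univ (fun x => θt x * C x y / p y)
      (fun x => θt1 x / θt x)
      (fun x _ => div_nonneg (mul_nonneg (hθt x) (hC x y)) (hpnn y)) hwsum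
      (fun x _ hwx => ?_)
    · rw [hwv] at this
      exact this
    -- show v positive where w positive
    · have hx' : 0 < θt x * C x y := by
        by_contra hcon
        push_neg at hcon
        have : θt x * C x y / p y ≤ 0 := div_nonpos_of_nonpos_of_nonneg hcon (hpnn y)
        linarith
      have hθx : 0 < θt x := by
        rcases mul_pos_iff.1 hx' with ⟨h1, _⟩ | ⟨h1, h2⟩
        · exact h1
        · exact absurd (hC x y) (not_le.2 h2)
      have hθt1x : 0 < θt1 x := by
        rw [hθt1def x]
        refine Finset.sum_pos' (fun y' _ => mul_nonneg (hτ y')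
          (div_nonneg (mul_nonneg (hθt x) (hC x y')) (hpnn y'))) ⟨y, Finset.mem_univ y, ?_⟩
        exact mul_pos hτy (div_pos hx' hpy)
      exact div_pos hθt1x hθx
  -- combine
  have hswap : ∑ y ∈ T, τ y * ∑ x, (θt x * C x y / p y) * Real.log (θt1 x / θt x)
      = ∑ x, θt1 x * Real.log (θt1 x / θt x) := by
    simp_rw [Finset.mul_sum]
    rw [Finset.sum_comm]
    refine Finset.sum_congr rfl (fun x _ => ?_)
    have : θt1 x = ∑ y ∈ T, τ y * (θt x * C x y / p y) := by
      rw [hθt1def x]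
      symm
      refine Finset.sum_filter_of_ne (fun y _ hne => ?_)
      rcases eq_or_lt_of_le (hτ y) with h | h
      · exact absurd (by simp [← h]) hne
      · exact h
    rw [this, Finset.sum_mul]
    exact Finset.sum_congr rfl (fun y _ => by ring)
  have hgibbs : 0 ≤ ∑ x, θt1 x * Real.log (θt1 x / θt x) := by
    refine gibbs_aux θt1 θt hθt1nn hθt hsum1 (le_of_eq hθt1) (fun x hx => ?_)
    rcases eq_or_lt_of_le (hθt x) with h | h
    · exact absurd (hzero x h.symm) (ne_of_gt hx)
    · exact h
  calc (0:ℝ) ≤ ∑ x, θt1 x * Real.log (θt1 x / θt x) := hgibbs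
    _ = ∑ y ∈ T, τ y * ∑ x, (θt x * C x y / p y) * Real.log (θt1 x / θt x) := hswap.symm
    _ ≤ ∑ y ∈ T, τ y * Real.log (q y / p y) := by
        refine Finset.sum_le_sum (fun y hy => ?_)
        exact mul_le_mul_of_nonneg_left (hjensen y hy) (hτ y)
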